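/- Each of the embedded weight vectors b̃₇ = (0, 2/5, 0, 1/10, 0, 0, 0, 1/5, 3/10, 0)ᵀ and b̃₈ = (1/7, 0, 5/14, 0, 0, 0, 0, 3/14, 2/7, 0)ᵀ for the SSPERK(10,4) method satisfies all third-order conditions — wᵀe = 1, wᵀc = 1/2, wᵀc² = 1/3, and wᵀ(c²/2 − Ac) = 0 — and violates the fourth-order condition wᵀc³ = 1/4: specifically b̃₇ᵀc³ = 89/360 ≠ 1/4 and b̃₈ᵀc³ = 61/252 ≠ 1/4, where A and c are the SSPERK(10,4) coefficient matrix and abscissae. -/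
import Mathlib


open Matrix

/-- Coefficient matrix of the optimal SSPERK(10,4) method (zero-indexed):
for `j < i`, the entry is `1/6` if `i ≤ 4` or `j ≥ 5`, and `1/15` otherwise. -/
noncomputable def A104 : Matrix (Fin 10) (Fin 10) ℝ :=
  Matrix.of fun i j =>
    if (j : ℕ) < (i : ℕ) then
      if (i : ℕ) ≤ 4 ∨ 5 ≤ (j : ℕ) then 1/6 else 1/15
    else 0

/-- Abscissae of the optimal SSPERK(10,4) method, `c = A·e`. -/
noncomputable def c104 : Fin 10 → ℝ := ![0, 1/6, 1/3, 1/2, 2/3, 1/3, 1/2, 2/3, 5/6, 1]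

/-- Embedded weight vector `b̃₇` for SSPERK(10,4). -/
noncomputable def bt7 : Fin 10 → ℝ := ![0, 2/5, 0, 1/10, 0, 0, 0, 1/5, 3/10, 0]

/-- Embedded weight vector `b̃₈` for SSPERK(10,4). -/
noncomputable def bt8 : Fin 10 → ℝ := ![1/7, 0, 5/14, 0, 0, 0, 0, 3/14, 2/7, 0]

/-- Both embedded weight vectors `b̃₇` and `b̃₈` for SSPERK(10,4) satisfy all
third-order conditions and violate the fourth-order condition `wᵀc³ = 1/4`:
`b̃₇ᵀc³ = 89/360 ≠ 1/4` and `b̃₈ᵀc³ = 61/252 ≠ 1/4`. -/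
theorem ssperk104_embedded_bt7_bt8_third_order_not_fourth :
    ((∑ j : Fin 10, bt7 j = 1) ∧
     (∑ j : Fin 10, bt7 j * c104 j = 1 / 2) ∧
     (∑ j : Fin 10, bt7 j * (c104 j) ^ 2 = 1 / 3) ∧
     (∑ j : Fin 10, bt7 j * ((c104 j) ^ 2 / 2 - A104.mulVec c104 j) = 0) ∧
     (∑ j : Fin 10, bt7 j * (c104 j) ^ 3 = 89 / 360) ∧
     ((89 : ℝ) / 360 ≠ 1 / 4)) ∧
    ((∑ j : Fin 10, bt8 j = 1) ∧
     (∑ j : Fin 10, bt8 j * c104 j = 1 / 2) ∧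
     (∑ j : Fin 10, bt8 j * (c104 j) ^ 2 = 1 / 3) ∧
     (∑ j : Fin 10, bt8 j * ((c104 j) ^ 2 / 2 - A104.mulVec c104 j) = 0) ∧
     (∑ j : Fin 10, bt8 j * (c104 j) ^ 3 = 61 / 252) ∧
     ((61 : ℝ) / 252 ≠ 1 / 4)) := by
  refine ⟨⟨?_, ?_, ?_, ?_, ?_, by norm_num⟩, ⟨?_, ?_, ?_, ?_, ?_, by norm_num⟩⟩ <;>
  · simp [A104, bt7, bt8, c104, Matrix.mulVec, dotProduct, Fin.sum_univ_succ]
    norm_num [Fin.lt_def]
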